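/- For all u > 0 with u ≠ 1, the function h(u) = 3(u-1)^2 / ((u - 1 - log u)(1 + 2u)) satisfies h(u) ≤ 2, and lim_{u→1} h(u) = 2, so sup_{u>0, u≠1} h(u) = 2. -/

import Mathlib

open Real Filter Set Topology

noncomputable def Faux (u : ℝ) : ℝ := (u-1)*(u+5)/(2*(2*u+1)) - Real.log u

lemma hasDerivFaux {u : ℝ} (hu : 0 < u) :
    HasDerivAt Faux (4*(u-1)^3/(u*(4*u+2)^2)) u := by
  have h1 : HasDerivAt (fun u : ℝ => (u-1)*(u+5)) (2*u+4) u := by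
    have := ((hasDerivAt_id u).sub_const 1).mul ((hasDerivAt_id u).add_const 5)
    refine this.congr_deriv ?_; simp [id_eq]; ring
  have h2 : HasDerivAt (fun u : ℝ => 2*(2*u+1)) 4 u := by
    have := (((hasDerivAt_id u).const_mul 2).add_const 1).const_mul 2
    refine this.congr_deriv ?_; norm_num
  have hq : 2*(2*u+1) ≠ 0 := by positivity
  have h3 := (h1.div h2 hq).sub (Real.hasDerivAt_log hu.ne')
  refine h3.congr_deriv ?_
  have hu' : u ≠ 0 := hu.ne'
  field_simp
  ring

lemma Faux_nonneg {u : ℝ} (hu : 0 < u) : 0 ≤ Faux u := by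
  have hF1 : Faux 1 = 0 := by norm_num [Faux]
  rcases lt_trichotomy u 1 with h | h | h
  · have hanti : StrictAntiOn Faux (Set.Ioc 0 1) := by
      apply strictAntiOn_of_deriv_neg (convex_Ioc 0 1)
      · exact fun x hx => (hasDerivFaux hx.1).continuousAt.continuousWithinAt
      · intro x hx
        rw [interior_Ioc] at hx
        rw [(hasDerivFaux hx.1).deriv]
        apply div_neg_of_neg_of_pos
        · have hneg : x - 1 < 0 := by linarith [hx.2]
          have := Odd.pow_neg (⟨1, by norm_num⟩ : Odd 3) hneg
          linarith
        · have h4 : (0:ℝ) < 4*x+2 := by linarith [hx.1]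
          exact mul_pos hx.1 (pow_pos h4 2)
    have := hanti (Set.mem_Ioc.mpr ⟨hu, h.le⟩) (Set.mem_Ioc.mpr ⟨one_pos, le_refl 1⟩) h
    linarith [hF1 ▸ this]
  · simp [h, hF1]
  · have hmono : StrictMonoOn Faux (Set.Ici 1) := by
      apply strictMonoOn_of_deriv_pos (convex_Ici 1)
      · exact fun x hx => (hasDerivFaux (lt_of_lt_of_le one_pos hx)).continuousAt.continuousWithinAt
      · intro x hx
        rw [interior_Ici] at hx
        have hx0 : (0:ℝ) < x := lt_trans one_pos hx
        rw [(hasDerivFaux hx0).deriv]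
        have hx1 : 1 < x := hx
        apply div_pos
        · have := pow_pos (by linarith : (0:ℝ) < x - 1) 3
          linarith
        · have h4 : (0:ℝ) < 4*x+2 := by linarith
          exact mul_pos hx0 (pow_pos h4 2)
    have := hmono (Set.mem_Ici.mpr le_rfl) (Set.mem_Ici.mpr h.le) h
    linarith [hF1 ▸ this]

lemma key_log {u : ℝ} (hu : 0 < u) : Real.log u ≤ (u-1)*(u+5)/(2*(2*u+1)) := by
  have := Faux_nonneg hu
  unfold Faux at this
  linarith

lemma denom_pos {u : ℝ} (hu : 0 < u) (hne : u ≠ 1) : 0 < u - 1 - Real.log u := by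
  have := Real.log_lt_sub_one_of_pos hu hne
  linarith

lemma part1 : ∀ u : ℝ, 0 < u → u ≠ 1 →
    3 * (u - 1) ^ 2 / ((u - 1 - Real.log u) * (1 + 2 * u)) ≤ 2 := by
  intro u hu hne
  have hd : 0 < (u - 1 - Real.log u) * (1 + 2 * u) := by
    apply mul_pos (denom_pos hu hne); linarith
  rw [div_le_iff₀ hd]
  have hk := key_log hu
  have h2u : (0:ℝ) < 2*(2*u+1) := by linarith
  rw [le_div_iff₀ h2u] at hk
  nlinarith [hk]

lemma part2 : Filter.Tendsto (fun u : ℝ => 3 * (u - 1) ^ 2 / ((u - 1 - Real.log u) * (1 + 2 * u)))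
    (nhdsWithin 1 {(1 : ℝ)}ᶜ) (nhds 2) := by
  have hev : ∀ᶠ u in nhdsWithin (1:ℝ) {(1:ℝ)}ᶜ, 0 < u ∧ u ≠ 1 := by
    filter_upwards [self_mem_nhdsWithin,
      eventually_nhdsWithin_of_eventually_nhds (eventually_gt_nhds (by norm_num : (0:ℝ) < 1))]
      with u h1 h2
    exact ⟨h2, h1⟩
  -- main limit via L'Hôpital: (u-1)^2 / (u-1-log u) → 2
  have hmain : Tendsto (fun u : ℝ => (u-1)^2 / (u - 1 - Real.log u)) (𝓝[≠] (1:ℝ)) (𝓝 2) := by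
    apply HasDerivAt.lhopital_zero_nhdsNE (f' := fun u => 2*(u-1)) (g' := fun u => (u-1)/u)
    · filter_upwards with u
      have := ((hasDerivAt_id u).sub_const 1).pow 2
      refine this.congr_deriv ?_; simp [id_eq]
    · filter_upwards [hev] with u hu
      have := ((hasDerivAt_id u).sub_const 1).sub (Real.hasDerivAt_log hu.1.ne')
      refine this.congr_deriv ?_
      field_simp [hu.1.ne']
    · filter_upwards [hev] with u hu
      exact div_ne_zero (sub_ne_zero.mpr hu.2) hu.1.ne'
    · have : Tendsto (fun u : ℝ => (u-1)^2) (𝓝 (1:ℝ)) (𝓝 (((1:ℝ)-1)^2)) :=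
        ((continuous_id.sub continuous_const).pow 2).tendsto 1
      norm_num at this
      exact this.mono_left nhdsWithin_le_nhds
    · have : Tendsto (fun u : ℝ => u - 1 - Real.log u) (𝓝 (1:ℝ)) (𝓝 0) := by
        have hl : ContinuousAt Real.log 1 := Real.continuousAt_log one_ne_zero
        have h : Tendsto (fun u : ℝ => u - 1 - Real.log u) (𝓝 1) (𝓝 (1 - 1 - Real.log 1)) :=
          (tendsto_id.sub tendsto_const_nhds).sub hl.tendsto
        simpa using h
      exact this.mono_left nhdsWithin_le_nhds
    · have heq : ∀ᶠ u in 𝓝[≠] (1:ℝ), 2*u = 2*(u-1) / ((u-1)/u) := by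
        filter_upwards [hev] with u hu
        rw [div_div_eq_mul_div, mul_comm (2*(u-1)) u, mul_div_assoc,
          mul_div_assoc]
        rw [div_self (sub_ne_zero.mpr hu.2)]
        ring
      have h2 : Tendsto (fun u : ℝ => 2*u) (𝓝[≠] (1:ℝ)) (𝓝 2) := by
        have h2' : Tendsto (fun u : ℝ => 2*u) (𝓝 (1:ℝ)) (𝓝 (2*1)) :=
          (continuous_const.mul continuous_id).tendsto 1
        norm_num at h2'
        exact h2'.mono_left nhdsWithin_le_nhds
      exact h2.congr' heq
  have hfac : Tendsto (fun u : ℝ => 3 / (1 + 2*u)) (𝓝[≠] (1:ℝ)) (𝓝 1) := by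
    have : Tendsto (fun u : ℝ => 3 / (1 + 2*u)) (𝓝 (1:ℝ)) (𝓝 (3/(1+2*1))) := by
      apply Tendsto.div tendsto_const_nhds
      · exact (continuous_const.add (continuous_const.mul continuous_id)).tendsto 1
      · norm_num
    norm_num at this
    exact this.mono_left nhdsWithin_le_nhds
  have := hmain.mul hfac
  rw [mul_one] at this
  apply this.congr'
  filter_upwards [hev] with u hu
  have hd := denom_pos hu.1 hu.2
  have h12 : (1:ℝ) + 2*u ≠ 0 := by nlinarith [hu.1]
  field_simp

theorem stmt_1 :
    (∀ u : ℝ, 0 < u → u ≠ 1 →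
      3 * (u - 1) ^ 2 / ((u - 1 - Real.log u) * (1 + 2 * u)) ≤ 2) ∧
    Filter.Tendsto (fun u : ℝ => 3 * (u - 1) ^ 2 / ((u - 1 - Real.log u) * (1 + 2 * u)))
      (nhdsWithin 1 {(1 : ℝ)}ᶜ) (nhds 2) ∧
    IsLUB ((fun u : ℝ => 3 * (u - 1) ^ 2 / ((u - 1 - Real.log u) * (1 + 2 * u))) ''
      {u : ℝ | 0 < u ∧ u ≠ 1}) 2 := by
  refine ⟨part1, part2, ?_, ?_⟩
  · rintro y ⟨u, ⟨hu, hne⟩, rfl⟩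
    exact part1 u hu hne
  · intro b hb
    have hev : ∀ᶠ u in nhdsWithin (1:ℝ) {(1:ℝ)}ᶜ,
        3 * (u - 1) ^ 2 / ((u - 1 - Real.log u) * (1 + 2 * u)) ≤ b := by
      filter_upwards [self_mem_nhdsWithin,
        eventually_nhdsWithin_of_eventually_nhds (eventually_gt_nhds (by norm_num : (0:ℝ) < 1))]
        with u h1 h2
      exact hb ⟨u, ⟨h2, h1⟩, rfl⟩
    exact le_of_tendsto part2 hev
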